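/- Let L: ℝ^{m×n} → ℝ be differentiable with ‖∇L(W)‖_F ≤ L₀ for all W and with ∇L M-Lipschitz (‖∇L(W) − ∇L(W′)‖_F ≤ M‖W − W′‖_F for all W, W′). Fix W_pt ∈ ℝ^{m×n} and γ_min, γ_max > 0. Let (A, B) and (Ã, B̃) in ℝ^{r×n} × ℝ^{m×r} satisfy γ_min·I ⪯ AAᵀ ⪯ γ_max·I, γ_min·I ⪯ BᵀB ⪯ γ_max·I, and the same bounds for Ã, B̃. Let G := ∇L(W_pt + BA), G̃ := ∇L(W_pt + B̃Ã), H := AAᵀ + BᵀB, H̃ := ÃÃᵀ + B̃ᵀB̃, and let X, X̃ be the unique solutions of H·X + X·H = (BᵀB)⁻¹BᵀGAᵀ + AGᵀB(BᵀB)⁻¹ and H̃·X̃ + X̃·H̃ = (B̃ᵀB̃)⁻¹B̃ᵀG̃Ãᵀ + ÃG̃ᵀB̃(B̃ᵀB̃)⁻¹, respectively. Then ‖X − X̃‖_F ≤ ( M·γ_max/(2·γ_min^{3/2}) + 3·L₀·γ_max^{3/2}/γ_min³ ) · ( ‖A − Ã‖_F + ‖B − B̃‖_F ). -/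

import Mathlib

open Matrix

/-- Frobenius norm of a real matrix. -/
noncomputable def frobNorm {m n : ℕ} (A : Matrix (Fin m) (Fin n) ℝ) : ℝ :=
  Real.sqrt (∑ i, ∑ j, (A i j) ^ 2)

/-- Frobenius (trace) inner product of two real matrices. -/
def frobInner {m n : ℕ} (A B : Matrix (Fin m) (Fin n) ℝ) : ℝ :=
  ∑ i, ∑ j, A i j * B i j


set_option maxHeartbeats 1600000

namespace Syl

variable {m n p q : ℕ}

lemma frobNorm_nonneg (A : Matrix (Fin m) (Fin n) ℝ) : 0 ≤ frobNorm A :=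
  Real.sqrt_nonneg _

lemma sum_sq_nonneg (A : Matrix (Fin m) (Fin n) ℝ) : 0 ≤ ∑ i, ∑ j, (A i j)^2 :=
  Finset.sum_nonneg fun _ _ => Finset.sum_nonneg fun _ _ => sq_nonneg _

lemma frobNorm_sq (A : Matrix (Fin m) (Fin n) ℝ) :
    frobNorm A ^ 2 = ∑ i, ∑ j, (A i j)^2 :=
  Real.sq_sqrt (sum_sq_nonneg A)

lemma frobInner_self (A : Matrix (Fin m) (Fin n) ℝ) :
    frobInner A A = frobNorm A ^ 2 := by
  rw [frobNorm_sq]; unfold frobInner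
  congr 1; funext; congr 1; funext; ring

lemma frobInner_comm (A B : Matrix (Fin m) (Fin n) ℝ) :
    frobInner A B = frobInner B A := by
  unfold frobInner; congr 1; funext; congr 1; funext; ring

lemma frobInner_le (A B : Matrix (Fin m) (Fin n) ℝ) :
    frobInner A B ≤ frobNorm A * frobNorm B := by
  unfold frobInner frobNorm
  have h := Real.sum_mul_le_sqrt_mul_sqrt (Finset.univ : Finset (Fin m × Fin n))
    (fun p => A p.1 p.2) (fun p => B p.1 p.2)
  simpa [Fintype.sum_prod_type] using h

lemma frobNorm_eq_sqrt_inner (A : Matrix (Fin m) (Fin n) ℝ) :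
    frobNorm A = Real.sqrt (frobInner A A) := by
  rw [frobInner_self, Real.sqrt_sq (frobNorm_nonneg A)]

lemma frobNorm_transpose (A : Matrix (Fin m) (Fin n) ℝ) :
    frobNorm Aᵀ = frobNorm A := by
  unfold frobNorm
  rw [Finset.sum_comm]
  simp [Matrix.transpose_apply]

lemma frobNorm_add_le (A B : Matrix (Fin m) (Fin n) ℝ) :
    frobNorm (A + B) ≤ frobNorm A + frobNorm B := by
  have h1 : frobNorm (A+B) ^ 2 ≤ (frobNorm A + frobNorm B)^2 := by
    have : frobNorm (A+B)^2 = frobInner A A + frobInner A B + (frobInner B A + frobInner B B) := by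
      rw [← frobInner_self]; unfold frobInner
      simp only [← Finset.sum_add_distrib]
      congr 1; funext i; congr 1; funext j
      simp [Matrix.add_apply]; ring
    rw [this, frobInner_self, frobInner_self]
    nlinarith [frobInner_le A B, frobInner_comm B A, frobNorm_nonneg A, frobNorm_nonneg B]
  nlinarith [frobNorm_nonneg (A+B), frobNorm_nonneg A, frobNorm_nonneg B]

end Syl

namespace Syl2
open Syl

variable {m n p q : ℕ}

lemma frobNorm_mul_le (X : Matrix (Fin m) (Fin p) ℝ) (Y : Matrix (Fin p) (Fin n) ℝ) :
    frobNorm (X * Y) ≤ frobNorm X * frobNorm Y := by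
  have hsq : frobNorm (X * Y) ^ 2 ≤ frobNorm X ^2 * frobNorm Y ^2 := by
    rw [frobNorm_sq, frobNorm_sq, frobNorm_sq]
    calc ∑ i, ∑ j, ((X*Y) i j)^2
        ≤ ∑ i, ∑ j, (∑ k, (X i k)^2) * (∑ k, (Y k j)^2) := by
          refine Finset.sum_le_sum fun i _ => Finset.sum_le_sum fun j _ => ?_
          simpa [Matrix.mul_apply] using
            Finset.sum_mul_sq_le_sq_mul_sq Finset.univ (fun k => X i k) (fun k => Y k j)
      _ = (∑ i, ∑ k, (X i k)^2) * (∑ k, ∑ j, (Y k j)^2) := by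
          rw [Finset.sum_mul]
          refine Finset.sum_congr rfl fun i _ => ?_
          rw [← Finset.mul_sum]
          congr 1
          exact Finset.sum_comm
  nlinarith [frobNorm_nonneg (X*Y), frobNorm_nonneg X, frobNorm_nonneg Y,
    mul_nonneg (frobNorm_nonneg X) (frobNorm_nonneg Y)]

lemma frobInner_mul_left (M : Matrix (Fin p) (Fin m) ℝ) (X : Matrix (Fin m) (Fin n) ℝ)
    (Y : Matrix (Fin p) (Fin n) ℝ) :
    frobInner (M * X) Y = frobInner X (Mᵀ * Y) := by
  unfold frobInner
  have e1 : ∀ i, ∑ j, (M*X) i j * Y i j = ∑ k, ∑ j, M i k * X k j * Y i j := by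
    intro i
    simp only [Matrix.mul_apply, Finset.sum_mul]
    exact Finset.sum_comm
  have e2 : ∀ k, ∑ j, X k j * (Mᵀ*Y) k j = ∑ j, ∑ i, M i k * X k j * Y i j := by
    intro k
    simp only [Matrix.mul_apply, Finset.mul_sum, Matrix.transpose_apply]
    exact Finset.sum_congr rfl fun j _ => Finset.sum_congr rfl fun i _ => by ring
  simp only [e1, e2]
  calc ∑ i, ∑ k, ∑ j, M i k * X k j * Y i j
      = ∑ k, ∑ i, ∑ j, M i k * X k j * Y i j := Finset.sum_comm
    _ = ∑ k, ∑ j, ∑ i, M i k * X k j * Y i j :=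
        Finset.sum_congr rfl fun k _ => Finset.sum_comm

lemma frobInner_mul_right (M : Matrix (Fin p) (Fin n) ℝ) (X : Matrix (Fin m) (Fin p) ℝ)
    (Y : Matrix (Fin m) (Fin n) ℝ) :
    frobInner (X * M) Y = frobInner X (Y * Mᵀ) := by
  unfold frobInner
  refine Finset.sum_congr rfl fun i _ => ?_
  have e1 : ∑ j, (X*M) i j * Y i j = ∑ j, ∑ k, X i k * M k j * Y i j := by
    simp only [Matrix.mul_apply, Finset.sum_mul]
  have e2 : ∑ k, X i k * (Y*Mᵀ) i k = ∑ k, ∑ j, X i k * M k j * Y i j := by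
    simp only [Matrix.mul_apply, Finset.mul_sum, Matrix.transpose_apply]
    exact Finset.sum_congr rfl fun k _ => Finset.sum_congr rfl fun j _ => by ring
  rw [e1, e2]
  exact Finset.sum_comm

lemma quad_left {P : Matrix (Fin m) (Fin m) ℝ} (hP : P.PosSemidef)
    (X : Matrix (Fin m) (Fin n) ℝ) : 0 ≤ frobInner X (P * X) := by
  unfold frobInner
  rw [Finset.sum_comm]
  refine Finset.sum_nonneg fun j _ => ?_
  have h := hP.dotProduct_mulVec_nonneg (fun i => X i j)
  simpa [dotProduct, Matrix.mulVec, Matrix.mul_apply] using h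

lemma quad_right {P : Matrix (Fin n) (Fin n) ℝ} (hP : P.PosSemidef)
    (X : Matrix (Fin m) (Fin n) ℝ) : 0 ≤ frobInner X (X * P) := by
  unfold frobInner
  refine Finset.sum_nonneg fun i _ => ?_
  have h := hP.transpose.dotProduct_mulVec_nonneg (fun j => X i j)
  have e : ∑ j, X i j * (X*P) i j
      = dotProduct (star fun j => X i j) (Pᵀ *ᵥ fun j => X i j) := by
    simp only [dotProduct, Matrix.mulVec, Matrix.mul_apply, Matrix.transpose_apply,
      Pi.star_apply, star_trivial, Finset.mul_sum]
    exact Finset.sum_congr rfl fun j _ => Finset.sum_congr rfl fun k _ => by ring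
  rw [e]; exact h

lemma frobNorm_mulVec_le {M : Matrix (Fin p) (Fin m) ℝ} {κ : ℝ} (hκ : 0 ≤ κ)
    (h : ∀ v : Fin m → ℝ, ∑ i, ((M *ᵥ v) i)^2 ≤ κ^2 * ∑ j, (v j)^2)
    (X : Matrix (Fin m) (Fin n) ℝ) :
    frobNorm (M * X) ≤ κ * frobNorm X := by
  have hsq : frobNorm (M * X)^2 ≤ κ^2 * frobNorm X ^2 := by
    rw [frobNorm_sq, frobNorm_sq, Finset.sum_comm]
    calc ∑ j, ∑ i, ((M*X) i j)^2
        ≤ ∑ j, κ^2 * ∑ i, (X i j)^2 := by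
          refine Finset.sum_le_sum fun j _ => ?_
          have := h (fun i => X i j)
          simpa [Matrix.mulVec, Matrix.mul_apply, dotProduct] using this
      _ = κ^2 * ∑ i, ∑ j, (X i j)^2 := by rw [← Finset.mul_sum, Finset.sum_comm]
  nlinarith [frobNorm_nonneg (M*X), frobNorm_nonneg X, mul_nonneg hκ (frobNorm_nonneg X)]

lemma frobNorm_mulVec_right_le {M : Matrix (Fin m) (Fin p) ℝ} {κ : ℝ} (hκ : 0 ≤ κ)
    (h : ∀ v : Fin m → ℝ, ∑ i, ((Mᵀ *ᵥ v) i)^2 ≤ κ^2 * ∑ j, (v j)^2)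
    (X : Matrix (Fin n) (Fin m) ℝ) :
    frobNorm (X * M) ≤ κ * frobNorm X := by
  have : frobNorm (X * M) = frobNorm (Mᵀ * Xᵀ) := by
    rw [← Matrix.transpose_mul, frobNorm_transpose]
  rw [this, ← frobNorm_transpose X]
  exact frobNorm_mulVec_le hκ h Xᵀ

end Syl2

namespace Syl3
open Syl Syl2

variable {a b r : ℕ}

lemma dot_CS (v w : Fin a → ℝ) :
    v ⬝ᵥ w ≤ Real.sqrt (∑ i, v i ^2) * Real.sqrt (∑ i, w i ^2) := by
  simpa [dotProduct] using
    Real.sum_mul_le_sqrt_mul_sqrt Finset.univ v w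

lemma psd_dot {Q : Matrix (Fin a) (Fin a) ℝ} (hQ : Q.PosSemidef) (v : Fin a → ℝ) :
    0 ≤ v ⬝ᵥ (Q *ᵥ v) := by
  simpa using hQ.dotProduct_mulVec_nonneg v

lemma psd_upper {Q : Matrix (Fin a) (Fin a) ℝ} {c : ℝ}
    (h : (c • (1 : Matrix (Fin a) (Fin a) ℝ) - Q).PosSemidef) (v : Fin a → ℝ) :
    v ⬝ᵥ (Q *ᵥ v) ≤ c * ∑ i, v i ^2 := by
  have h2 := psd_dot h v
  rw [Matrix.sub_mulVec, dotProduct_sub, Matrix.smul_mulVec,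
    Matrix.one_mulVec, dotProduct_smul] at h2
  have : v ⬝ᵥ v = ∑ i, v i ^2 := by
    simp [dotProduct, sq]
  rw [this] at h2
  simp only [smul_eq_mul] at h2
  linarith [h2]

lemma psd_lower {Q : Matrix (Fin a) (Fin a) ℝ} {c : ℝ}
    (h : (Q - c • (1 : Matrix (Fin a) (Fin a) ℝ)).PosSemidef) (v : Fin a → ℝ) :
    c * ∑ i, v i ^2 ≤ v ⬝ᵥ (Q *ᵥ v) := by
  have h2 := psd_dot h v
  rw [Matrix.sub_mulVec, dotProduct_sub, Matrix.smul_mulVec,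
    Matrix.one_mulVec, dotProduct_smul] at h2
  have : v ⬝ᵥ v = ∑ i, v i ^2 := by
    simp [dotProduct, sq]
  rw [this] at h2
  simp only [smul_eq_mul] at h2
  linarith [h2]

lemma dot_self_eq (v : Fin a → ℝ) : v ⬝ᵥ v = ∑ i, v i ^2 := by
  simp [dotProduct, sq]

/-- spectral bound for `Nᵀ` from `N * Nᵀ ⪯ c`. -/
lemma vec_bound_t {N : Matrix (Fin a) (Fin b) ℝ} {c : ℝ}
    (h : (c • (1 : Matrix (Fin a) (Fin a) ℝ) - N * Nᵀ).PosSemidef)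
    (w : Fin a → ℝ) : ∑ i, ((Nᵀ *ᵥ w) i)^2 ≤ c * ∑ i, w i ^2 := by
  have e : ∑ i, ((Nᵀ *ᵥ w) i)^2 = w ⬝ᵥ ((N * Nᵀ) *ᵥ w) := by
    rw [← dot_self_eq, ← Matrix.mulVec_mulVec]
    rw [Matrix.mulVec_transpose, Matrix.dotProduct_mulVec]
  rw [e]
  exact psd_upper h w

/-- spectral bound for `N` from `N * Nᵀ ⪯ c`. -/
lemma vec_bound {N : Matrix (Fin a) (Fin b) ℝ} {c : ℝ} (hc : 0 ≤ c)
    (h : (c • (1 : Matrix (Fin a) (Fin a) ℝ) - N * Nᵀ).PosSemidef)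
    (u : Fin b → ℝ) : ∑ i, ((N *ᵥ u) i)^2 ≤ c * ∑ i, u i ^2 := by
  set t := ∑ i, ((N *ᵥ u) i)^2 with ht
  have ht0 : 0 ≤ t := Finset.sum_nonneg fun _ _ => sq_nonneg _
  have hu0 : (0:ℝ) ≤ ∑ i, u i ^2 := Finset.sum_nonneg fun _ _ => sq_nonneg _
  rcases eq_or_lt_of_le ht0 with h0 | hpos
  · rw [← h0]; positivity
  -- t = u ⬝ᵥ (Nᵀ *ᵥ (N *ᵥ u))
  have e : t = u ⬝ᵥ (Nᵀ *ᵥ (N *ᵥ u)) := by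
    rw [ht, ← dot_self_eq]
    rw [Matrix.mulVec_transpose, Matrix.dotProduct_mulVec]
    exact dotProduct_comm _ _
  have h1 : ∑ i, ((Nᵀ *ᵥ (N *ᵥ u)) i)^2 ≤ c * t := vec_bound_t h (N *ᵥ u)
  have h2 : t ≤ Real.sqrt (∑ i, u i ^2) * Real.sqrt (c * t) := by
    calc t = u ⬝ᵥ (Nᵀ *ᵥ (N *ᵥ u)) := e
      _ ≤ Real.sqrt (∑ i, u i ^2) * Real.sqrt (∑ i, ((Nᵀ *ᵥ (N *ᵥ u)) i)^2) := dot_CS _ _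
      _ ≤ Real.sqrt (∑ i, u i ^2) * Real.sqrt (c * t) := by
          apply mul_le_mul_of_nonneg_left _ (Real.sqrt_nonneg _)
          exact Real.sqrt_le_sqrt h1
  have h3 : t^2 ≤ (∑ i, u i ^2) * (c * t) := by
    have := mul_le_mul h2 h2 (le_of_lt hpos) (by positivity)
    calc t^2 = t * t := sq t
      _ ≤ (Real.sqrt (∑ i, u i ^2) * Real.sqrt (c * t)) *
          (Real.sqrt (∑ i, u i ^2) * Real.sqrt (c * t)) := this
      _ = (∑ i, u i ^2) * (c * t) := by
          rw [show ∀ x y : ℝ, (x*y)*(x*y) = (x*x)*(y*y) by intros; ring,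
            Real.mul_self_sqrt hu0, Real.mul_self_sqrt (by positivity)]
  nlinarith [h3, hpos]

end Syl3

namespace Syl4
open Syl Syl2 Syl3

variable {a b r mm : ℕ}

section Gram

variable {B : Matrix (Fin mm) (Fin r) ℝ} {γ : ℝ}

lemma gram_posdef (hγ : 0 < γ)
    (h : (Bᵀ * B - γ • (1 : Matrix (Fin r) (Fin r) ℝ)).PosSemidef) :
    (Bᵀ * B).PosDef := by
  refine Matrix.PosDef.of_dotProduct_mulVec_pos (Matrix.posSemidef_conjTranspose_mul_self B).1 fun x hx => ?_
  have hlow := psd_lower h x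
  have hxpos : 0 < ∑ i, x i ^2 := by
    rcases Function.ne_iff.mp hx with ⟨i, hi⟩
    have h1 : 0 < x i ^ 2 := lt_of_le_of_ne (sq_nonneg _) (Ne.symm (pow_ne_zero 2 hi))
    exact lt_of_lt_of_le h1 (Finset.single_le_sum (fun j _ => sq_nonneg (x j)) (Finset.mem_univ i))
  have h2 : (0:ℝ) < γ * ∑ i, x i ^2 := by positivity
  simpa using lt_of_lt_of_le h2 hlow

lemma gram_mul_inv (hγ : 0 < γ)
    (h : (Bᵀ * B - γ • (1 : Matrix (Fin r) (Fin r) ℝ)).PosSemidef) :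
    (Bᵀ * B) * (Bᵀ * B)⁻¹ = 1 :=
  Matrix.mul_nonsing_inv _ (gram_posdef hγ h).det_pos.ne'.isUnit

lemma gram_inv_mul (hγ : 0 < γ)
    (h : (Bᵀ * B - γ • (1 : Matrix (Fin r) (Fin r) ℝ)).PosSemidef) :
    (Bᵀ * B)⁻¹ * (Bᵀ * B) = 1 :=
  Matrix.nonsing_inv_mul _ (gram_posdef hγ h).det_pos.ne'.isUnit

lemma gram_inv_symm (B : Matrix (Fin mm) (Fin r) ℝ) :
    ((Bᵀ * B)⁻¹)ᵀ = (Bᵀ * B)⁻¹ := by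
  rw [Matrix.transpose_nonsing_inv]
  congr 1
  rw [Matrix.transpose_mul, Matrix.transpose_transpose]

/-- `‖(BᵀB)⁻¹ v‖ ≤ γ⁻¹ ‖v‖` (squared form). -/
lemma vec_bound_gram_inv (hγ : 0 < γ)
    (h : (Bᵀ * B - γ • (1 : Matrix (Fin r) (Fin r) ℝ)).PosSemidef)
    (v : Fin r → ℝ) :
    ∑ i, (((Bᵀ * B)⁻¹ *ᵥ v) i)^2 ≤ (γ⁻¹)^2 * ∑ i, v i ^2 := by
  set u := (Bᵀ * B)⁻¹ *ᵥ v with hu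
  have hKu : (Bᵀ * B) *ᵥ u = v := by
    rw [hu, Matrix.mulVec_mulVec, gram_mul_inv hγ h, Matrix.one_mulVec]
  set t := ∑ i, u i ^2 with htdef
  have ht0 : 0 ≤ t := Finset.sum_nonneg fun _ _ => sq_nonneg _
  have hv0 : (0:ℝ) ≤ ∑ i, v i ^2 := Finset.sum_nonneg fun _ _ => sq_nonneg _
  have h1 : γ * t ≤ u ⬝ᵥ v := by
    have := psd_lower h u
    rwa [hKu] at this
  have h2 : u ⬝ᵥ v ≤ Real.sqrt t * Real.sqrt (∑ i, v i ^2) := dot_CS u v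
  rcases eq_or_lt_of_le ht0 with h0 | hpos
  · rw [← h0]; positivity
  have h3 : (γ * t)^2 ≤ t * ∑ i, v i ^2 := by
    have hle : γ * t ≤ Real.sqrt t * Real.sqrt (∑ i, v i ^2) := le_trans h1 h2
    have hγt : 0 ≤ γ * t := by positivity
    calc (γ*t)^2 = (γ*t)*(γ*t) := sq _
      _ ≤ (Real.sqrt t * Real.sqrt (∑ i, v i ^2)) * (Real.sqrt t * Real.sqrt (∑ i, v i ^2)) :=
          mul_le_mul hle hle hγt (by positivity)
      _ = t * ∑ i, v i ^2 := by
          rw [show ∀ x y : ℝ, (x*y)*(x*y) = (x*x)*(y*y) by intros; ring,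
            Real.mul_self_sqrt ht0, Real.mul_self_sqrt hv0]
  have hγ2 : (0:ℝ) < γ^2 := by positivity
  rw [inv_pow, inv_mul_eq_div, le_div_iff₀ hγ2]
  nlinarith [h3, hpos]

/-- `‖(BᵀB)⁻¹ Bᵀ v‖² ≤ γ⁻¹ ‖v‖²`. -/
lemma vec_bound_pinv (hγ : 0 < γ)
    (h : (Bᵀ * B - γ • (1 : Matrix (Fin r) (Fin r) ℝ)).PosSemidef)
    (v : Fin mm → ℝ) :
    ∑ i, ((((Bᵀ * B)⁻¹ * Bᵀ) *ᵥ v) i)^2 ≤ ((Real.sqrt γ)⁻¹)^2 * ∑ i, v i ^2 := by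
  set z := ((Bᵀ * B)⁻¹ * Bᵀ) *ᵥ v with hz
  set w := B *ᵥ z with hw
  set t := ∑ i, z i ^2 with htdef
  set s := ∑ i, w i ^2 with hsdef
  have ht0 : 0 ≤ t := Finset.sum_nonneg fun _ _ => sq_nonneg _
  have hs0 : 0 ≤ s := Finset.sum_nonneg fun _ _ => sq_nonneg _
  have hv0 : (0:ℝ) ≤ ∑ i, v i ^2 := Finset.sum_nonneg fun _ _ => sq_nonneg _
  -- γ t ≤ s
  have hgts : γ * t ≤ s := by
    have h1 := psd_lower h z
    have e : z ⬝ᵥ ((Bᵀ * B) *ᵥ z) = s := by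
      rw [hsdef, ← dot_self_eq, hw, ← Matrix.mulVec_mulVec,
        Matrix.mulVec_transpose, Matrix.dotProduct_mulVec]
      exact dotProduct_comm _ _
    linarith [e ▸ h1]
  -- Π = B * ((BᵀB)⁻¹ * Bᵀ)
  set Pi := B * ((Bᵀ * B)⁻¹ * Bᵀ) with hPidef
  have hwPiv : w = Pi *ᵥ v := by rw [hw, hz, hPidef, Matrix.mulVec_mulVec]
  have hPisymm : Piᵀ = Pi := by
    rw [hPidef, Matrix.transpose_mul, Matrix.transpose_mul, Matrix.transpose_transpose,
      gram_inv_symm, Matrix.mul_assoc]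
  have hPiidem : Pi * Pi = Pi := by
    rw [hPidef]
    have e1 : Bᵀ * (B * ((Bᵀ*B)⁻¹ * Bᵀ)) = Bᵀ := by
      calc Bᵀ * (B * ((Bᵀ*B)⁻¹ * Bᵀ)) = ((Bᵀ*B) * (Bᵀ*B)⁻¹) * Bᵀ := by
            simp only [Matrix.mul_assoc]
        _ = Bᵀ := by rw [gram_mul_inv hγ h, Matrix.one_mul]
    calc B * ((Bᵀ*B)⁻¹ * Bᵀ) * (B * ((Bᵀ*B)⁻¹ * Bᵀ))
        = B * ((Bᵀ*B)⁻¹ * (Bᵀ * (B * ((Bᵀ*B)⁻¹ * Bᵀ)))) := by simp only [Matrix.mul_assoc]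
      _ = B * ((Bᵀ*B)⁻¹ * Bᵀ) := by rw [e1]
  -- s = v ⬝ w
  have hsvw : s = v ⬝ᵥ w := by
    have hu : w ᵥ* Pi = w := by
      rw [← Matrix.mulVec_transpose, hPisymm, hwPiv, Matrix.mulVec_mulVec, hPiidem]
    rw [hsdef, ← dot_self_eq]
    calc w ⬝ᵥ w = w ⬝ᵥ (Pi *ᵥ v) := by rw [← hwPiv]
      _ = (w ᵥ* Pi) ⬝ᵥ v := Matrix.dotProduct_mulVec w Pi v
      _ = w ⬝ᵥ v := by rw [hu]
      _ = v ⬝ᵥ w := dotProduct_comm _ _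
  -- s ≤ ∑ v²
  have hsv : s ≤ ∑ i, v i ^2 := by
    rcases eq_or_lt_of_le hs0 with h0 | hpos
    · rw [← h0]; exact hv0
    have h2 : s ≤ Real.sqrt (∑ i, v i ^2) * Real.sqrt s := by
      calc s = v ⬝ᵥ w := hsvw
        _ ≤ Real.sqrt (∑ i, v i ^2) * Real.sqrt s := dot_CS v w
    nlinarith [Real.sq_sqrt hv0, Real.sq_sqrt hs0, Real.sqrt_nonneg s,
      Real.sqrt_nonneg (∑ i, v i ^2), hpos]
  -- conclude
  have hfin : t ≤ γ⁻¹ * ∑ i, v i ^2 := by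
    rw [inv_mul_eq_div, le_div_iff₀ hγ]
    nlinarith [hgts, hsv]
  have : ((Real.sqrt γ)⁻¹)^2 = γ⁻¹ := by
    rw [inv_pow, Real.sq_sqrt hγ.le]
  rw [this]
  exact hfin

end Gram

end Syl4

namespace Syl5
open Syl Syl2 Syl3 Syl4

variable {a b r mm nn : ℕ}

lemma frobInner_add_right (X Y Z : Matrix (Fin a) (Fin b) ℝ) :
    frobInner X (Y + Z) = frobInner X Y + frobInner X Z := by
  unfold frobInner
  simp [Matrix.add_apply, mul_add, Finset.sum_add_distrib]

lemma frobInner_sub_right (X Y Z : Matrix (Fin a) (Fin b) ℝ) :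
    frobInner X (Y - Z) = frobInner X Y - frobInner X Z := by
  unfold frobInner
  simp [Matrix.sub_apply, mul_sub, Finset.sum_sub_distrib]

lemma frobInner_smul_right (c : ℝ) (X Y : Matrix (Fin a) (Fin b) ℝ) :
    frobInner X (c • Y) = c * frobInner X Y := by
  unfold frobInner
  simp [Matrix.smul_apply, Finset.mul_sum, smul_eq_mul]
  exact Finset.sum_congr rfl fun i _ => Finset.sum_congr rfl fun j _ => by ring

section opnorm

variable {N : Matrix (Fin a) (Fin b) ℝ} {c : ℝ}

lemma normL (hc : 0 ≤ c)
    (h : (c • (1 : Matrix (Fin a) (Fin a) ℝ) - N * Nᵀ).PosSemidef)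
    (X : Matrix (Fin b) (Fin nn) ℝ) :
    frobNorm (N * X) ≤ Real.sqrt c * frobNorm X := by
  refine frobNorm_mulVec_le (Real.sqrt_nonneg c) (fun v => ?_) X
  rw [Real.sq_sqrt hc]
  exact vec_bound hc h v

lemma normLT (hc : 0 ≤ c)
    (h : (c • (1 : Matrix (Fin a) (Fin a) ℝ) - N * Nᵀ).PosSemidef)
    (X : Matrix (Fin a) (Fin nn) ℝ) :
    frobNorm (Nᵀ * X) ≤ Real.sqrt c * frobNorm X := by
  refine frobNorm_mulVec_le (Real.sqrt_nonneg c) (fun v => ?_) X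
  rw [Real.sq_sqrt hc]
  exact vec_bound_t h v

lemma normR (hc : 0 ≤ c)
    (h : (c • (1 : Matrix (Fin a) (Fin a) ℝ) - N * Nᵀ).PosSemidef)
    (X : Matrix (Fin nn) (Fin a) ℝ) :
    frobNorm (X * N) ≤ Real.sqrt c * frobNorm X := by
  refine frobNorm_mulVec_right_le (Real.sqrt_nonneg c) (fun v => ?_) X
  rw [Real.sq_sqrt hc]
  exact vec_bound_t h v

lemma normRT (hc : 0 ≤ c)
    (h : (c • (1 : Matrix (Fin a) (Fin a) ℝ) - N * Nᵀ).PosSemidef)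
    (X : Matrix (Fin nn) (Fin b) ℝ) :
    frobNorm (X * Nᵀ) ≤ Real.sqrt c * frobNorm X := by
  refine frobNorm_mulVec_right_le (Real.sqrt_nonneg c) (fun v => ?_) X
  rw [Real.sq_sqrt hc, Matrix.transpose_transpose]
  exact vec_bound hc h v

end opnorm

section gramnorm

variable {B : Matrix (Fin mm) (Fin r) ℝ} {γ : ℝ}

lemma pinvL (hγ : 0 < γ)
    (h : (Bᵀ * B - γ • (1 : Matrix (Fin r) (Fin r) ℝ)).PosSemidef)
    (X : Matrix (Fin mm) (Fin nn) ℝ) :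
    frobNorm ((Bᵀ * B)⁻¹ * Bᵀ * X) ≤ (Real.sqrt γ)⁻¹ * frobNorm X := by
  refine frobNorm_mulVec_le (by positivity) (fun v => ?_) X
  exact vec_bound_pinv hγ h v

lemma pinvR (hγ : 0 < γ)
    (h : (Bᵀ * B - γ • (1 : Matrix (Fin r) (Fin r) ℝ)).PosSemidef)
    (X : Matrix (Fin nn) (Fin mm) ℝ) :
    frobNorm (X * B * (Bᵀ * B)⁻¹) ≤ (Real.sqrt γ)⁻¹ * frobNorm X := by
  rw [Matrix.mul_assoc]
  refine frobNorm_mulVec_right_le (by positivity) (fun v => ?_) X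
  have e : (B * (Bᵀ * B)⁻¹)ᵀ = (Bᵀ * B)⁻¹ * Bᵀ := by
    rw [Matrix.transpose_mul, gram_inv_symm]
  rw [e]
  exact vec_bound_pinv hγ h v

lemma invL (hγ : 0 < γ)
    (h : (Bᵀ * B - γ • (1 : Matrix (Fin r) (Fin r) ℝ)).PosSemidef)
    (X : Matrix (Fin r) (Fin nn) ℝ) :
    frobNorm ((Bᵀ * B)⁻¹ * X) ≤ γ⁻¹ * frobNorm X := by
  refine frobNorm_mulVec_le (by positivity) (fun v => ?_) X
  exact vec_bound_gram_inv hγ h v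

lemma invR (hγ : 0 < γ)
    (h : (Bᵀ * B - γ • (1 : Matrix (Fin r) (Fin r) ℝ)).PosSemidef)
    (X : Matrix (Fin nn) (Fin r) ℝ) :
    frobNorm (X * (Bᵀ * B)⁻¹) ≤ γ⁻¹ * frobNorm X := by
  refine frobNorm_mulVec_right_le (by positivity) (fun v => ?_) X
  rw [gram_inv_symm]
  exact vec_bound_gram_inv hγ h v

end gramnorm

/-- Coercivity bound for the Sylvester equation. -/
lemma syl_bound {H C X : Matrix (Fin r) (Fin r) ℝ} {c : ℝ} (hc : 0 < c)
    (hpsd : (H - c • (1 : Matrix (Fin r) (Fin r) ℝ)).PosSemidef)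
    (heq : H * X + X * H = C) :
    frobNorm X ≤ frobNorm C / (2 * c) := by
  have l1 : c * frobNorm X ^2 ≤ frobInner X (H * X) := by
    have h0 := quad_left hpsd X
    rw [Matrix.sub_mul, Matrix.smul_mul, Matrix.one_mul, frobInner_sub_right,
      frobInner_smul_right, frobInner_self] at h0
    linarith
  have l2 : c * frobNorm X ^2 ≤ frobInner X (X * H) := by
    have h0 := quad_right hpsd X
    rw [Matrix.mul_sub, Matrix.mul_smul, Matrix.mul_one, frobInner_sub_right,
      frobInner_smul_right, frobInner_self] at h0
    linarith
  have l3 : 2 * c * frobNorm X ^2 ≤ frobNorm X * frobNorm C := by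
    calc 2 * c * frobNorm X^2 = c * frobNorm X^2 + c * frobNorm X^2 := by ring
      _ ≤ frobInner X (H*X) + frobInner X (X*H) := add_le_add l1 l2
      _ = frobInner X C := by rw [← frobInner_add_right, heq]
      _ ≤ frobNorm X * frobNorm C := frobInner_le X C
  rcases eq_or_lt_of_le (frobNorm_nonneg X) with h0 | hpos
  · rw [← h0]
    exact div_nonneg (frobNorm_nonneg C) (by positivity)
  · rw [le_div_iff₀ (by positivity)]
    nlinarith [l3, hpos]

end Syl5

namespace Syl6
open Syl Syl2 Syl3 Syl4 Syl5

variable {a b : ℕ}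

lemma frobNorm_neg (A : Matrix (Fin a) (Fin b) ℝ) : frobNorm (-A) = frobNorm A := by
  unfold frobNorm
  congr 1
  refine Finset.sum_congr rfl fun i _ => Finset.sum_congr rfl fun j _ => ?_
  simp [Matrix.neg_apply]

lemma frobNorm_sub_le (A B : Matrix (Fin a) (Fin b) ℝ) :
    frobNorm (A - B) ≤ frobNorm A + frobNorm B := by
  rw [sub_eq_add_neg]
  exact le_trans (frobNorm_add_le A (-B)) (by rw [frobNorm_neg])

lemma frobNorm_sub_comm (A B : Matrix (Fin a) (Fin b) ℝ) :
    frobNorm (A - B) = frobNorm (B - A) := by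
  rw [show A - B = -(B - A) by abel, frobNorm_neg]

end Syl6

lemma sylKey (g1 g2 q s w1 w2 M L0 : ℝ) (hq : 0 < q) (hs : 0 < s) (hqs : q ≤ s)
    (e1 : g1 = q^2) (e2 : g2 = s^2)
    (hL : 0 ≤ L0) (hM : 0 ≤ M) (h1 : 0 ≤ w1) (h2 : 0 ≤ w2) :
  (2*( s*((s*(g1⁻¹*(g1⁻¹*(s*w2)) + g1⁻¹*(g1⁻¹*(s*w2))))*L0)
     + s*((g1⁻¹*w2)*L0)
     + s*(q⁻¹*(M*(s*(w1+w2))))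
     + q⁻¹*(L0*w1))
   + ((s*w1 + s*w1 + (s*w2 + s*w2))*((2*(s*(q⁻¹*L0)))/(2*(2*g1)))
      + ((2*(s*(q⁻¹*L0)))/(2*(2*g1)))*(s*w1 + s*w1 + (s*w2 + s*w2))))/(2*(2*g1))
  ≤ (M*g2/(2*q^3) + 3*L0*s^3/g1^3)*(w1+w2) := by
  subst e1; subst e2
  have hq' := hq.ne'
  have hq3 : q^3 ≤ s^3 := pow_le_pow_left₀ hq.le hqs 3
  have hq2 : q^2 ≤ s^2 := pow_le_pow_left₀ hq.le hqs 2
  rw [div_le_iff₀ (by positivity)]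
  field_simp
  ring_nf
  have ha' : (0:ℝ) ≤ L0*w2*(s*(s^2-q^2))*q^16 :=
    mul_nonneg (mul_nonneg (mul_nonneg hL h2) (mul_nonneg hs.le (sub_nonneg.mpr hq2))) (pow_nonneg hq.le 16)
  have hb' : (0:ℝ) ≤ L0*w2*((s-q)*s^2)*q^16 :=
    mul_nonneg (mul_nonneg (mul_nonneg hL h2) (mul_nonneg (sub_nonneg.mpr hqs) (sq_nonneg s))) (pow_nonneg hq.le 16)
  have hc' : (0:ℝ) ≤ L0*w1*((s-q)*s^2)*q^16 :=
    mul_nonneg (mul_nonneg (mul_nonneg hL h1) (mul_nonneg (sub_nonneg.mpr hqs) (sq_nonneg s))) (pow_nonneg hq.le 16)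
  have hd' : (0:ℝ) ≤ L0*w1*(s^3-q^3)*q^16 :=
    mul_nonneg (mul_nonneg (mul_nonneg hL h1) (sub_nonneg.mpr hq3)) (pow_nonneg hq.le 16)
  have he' : (0:ℝ) ≤ L0*w2*s^3*q^16 :=
    mul_nonneg (mul_nonneg (mul_nonneg hL h2) (pow_nonneg hs.le 3)) (pow_nonneg hq.le 16)
  have hf' : (0:ℝ) ≤ L0*w1*s^3*q^16 :=
    mul_nonneg (mul_nonneg (mul_nonneg hL h1) (pow_nonneg hs.le 3)) (pow_nonneg hq.le 16)
  nlinarith [ha', hb', hc', hd', he', hf',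
    mul_nonneg (mul_nonneg hL h2) (mul_nonneg hs.le (sub_nonneg.mpr hq2)),
    mul_nonneg (mul_nonneg hL h2) (mul_nonneg (sub_nonneg.mpr hqs) (sq_nonneg s)),
    mul_nonneg (mul_nonneg hL h1) (mul_nonneg (sub_nonneg.mpr hqs) (sq_nonneg s)),
    mul_nonneg (mul_nonneg hL h1) (sub_nonneg.mpr hq3),
    mul_nonneg (mul_nonneg hL h2) (pow_nonneg hs.le 3),
    mul_nonneg (mul_nonneg hL h1) (pow_nonneg hs.le 3)]



open Syl Syl2 Syl3 Syl4 Syl5 Syl6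

/-- Lipschitz continuity of the solution of the ODELoRA Sylvester equation
with respect to the LoRA factors `(A, B)`. -/
theorem sylvester_solution_lipschitz {m n r : ℕ}
    (L : Matrix (Fin m) (Fin n) ℝ → ℝ)
    (gradL : Matrix (Fin m) (Fin n) ℝ → Matrix (Fin m) (Fin n) ℝ)
    -- `gradL` is the gradient of the differentiable function `L`
    (hgrad : ∀ (W Δ : Matrix (Fin m) (Fin n) ℝ),
      HasDerivAt (fun t : ℝ => L (W + t • Δ)) (frobInner (gradL W) Δ) 0)
    (L₀ M : ℝ)
    (hbound : ∀ W, frobNorm (gradL W) ≤ L₀)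
    (hlip : ∀ W W' : Matrix (Fin m) (Fin n) ℝ,
      frobNorm (gradL W - gradL W') ≤ M * frobNorm (W - W'))
    (Wpt : Matrix (Fin m) (Fin n) ℝ)
    (γmin γmax : ℝ) (hγmin : 0 < γmin) (hγmax : 0 < γmax)
    (A At : Matrix (Fin r) (Fin n) ℝ) (B Bt : Matrix (Fin m) (Fin r) ℝ)
    (hA1 : (A * Aᵀ - γmin • (1 : Matrix (Fin r) (Fin r) ℝ)).PosSemidef)
    (hA2 : (γmax • (1 : Matrix (Fin r) (Fin r) ℝ) - A * Aᵀ).PosSemidef)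
    (hB1 : (Bᵀ * B - γmin • (1 : Matrix (Fin r) (Fin r) ℝ)).PosSemidef)
    (hB2 : (γmax • (1 : Matrix (Fin r) (Fin r) ℝ) - Bᵀ * B).PosSemidef)
    (hA1t : (At * Atᵀ - γmin • (1 : Matrix (Fin r) (Fin r) ℝ)).PosSemidef)
    (hA2t : (γmax • (1 : Matrix (Fin r) (Fin r) ℝ) - At * Atᵀ).PosSemidef)
    (hB1t : (Btᵀ * Bt - γmin • (1 : Matrix (Fin r) (Fin r) ℝ)).PosSemidef)
    (hB2t : (γmax • (1 : Matrix (Fin r) (Fin r) ℝ) - Btᵀ * Bt).PosSemidef)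
    (X Xt : Matrix (Fin r) (Fin r) ℝ)
    (hX : (A * Aᵀ + Bᵀ * B) * X + X * (A * Aᵀ + Bᵀ * B)
        = (Bᵀ * B)⁻¹ * Bᵀ * gradL (Wpt + B * A) * Aᵀ
          + A * (gradL (Wpt + B * A))ᵀ * B * (Bᵀ * B)⁻¹)
    (hXt : (At * Atᵀ + Btᵀ * Bt) * Xt + Xt * (At * Atᵀ + Btᵀ * Bt)
        = (Btᵀ * Bt)⁻¹ * Btᵀ * gradL (Wpt + Bt * At) * Atᵀ
          + At * (gradL (Wpt + Bt * At))ᵀ * Bt * (Btᵀ * Bt)⁻¹) :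
    frobNorm (X - Xt)
      ≤ (M * γmax / (2 * γmin ^ ((3:ℝ)/2)) + 3 * L₀ * γmax ^ ((3:ℝ)/2) / γmin ^ 3)
        * (frobNorm (A - At) + frobNorm (B - Bt)) := by
  rcases Nat.eq_zero_or_pos r with hr0 | hr
  · subst hr0
    simp [frobNorm]
  have ha0 : 0 ≤ (frobNorm (A - At)) := frobNorm_nonneg _
  have hb0 : 0 ≤ (frobNorm (B - Bt)) := frobNorm_nonneg _
  have hL0 : 0 ≤ L₀ := le_trans (frobNorm_nonneg _) (hbound 0)
  have hq0 : 0 < (Real.sqrt γmin) := Real.sqrt_pos.mpr hγmin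
  have hs0 : 0 < (Real.sqrt γmax) := Real.sqrt_pos.mpr hγmax
  have hγq : γmin = (Real.sqrt γmin)^2 := (Real.sq_sqrt hγmin.le).symm
  have hγs : γmax = (Real.sqrt γmax)^2 := (Real.sq_sqrt hγmax.le).symm
  have hrpos : (0:ℝ) < r := by exact_mod_cast hr
  have hmono : γmin ≤ γmax := by
    have h := hA1.add hA2
    have e : (A * Aᵀ - γmin • (1 : Matrix (Fin r) (Fin r) ℝ))
        + (γmax • (1 : Matrix (Fin r) (Fin r) ℝ) - A * Aᵀ)
        = (γmax - γmin) • (1 : Matrix (Fin r) (Fin r) ℝ) := by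
      rw [sub_smul]; abel
    rw [e] at h
    have h2 := psd_dot h (fun _ => (1:ℝ))
    simp [Matrix.smul_mulVec, Matrix.one_mulVec, dotProduct,
      Finset.sum_const, Finset.card_univ] at h2
    nlinarith [h2, hrpos]
  have hqs : (Real.sqrt γmin) ≤ (Real.sqrt γmax) := Real.sqrt_le_sqrt hmono
  have hm : 0 < m := by
    rcases Nat.eq_zero_or_pos m with hm0 | hm
    · exfalso
      subst hm0
      have hz : Bᵀ * B = 0 := by
        ext i j
        simp [Matrix.mul_apply]
      rw [hz] at hB1
      have h2 := psd_lower (Q := (0 : Matrix (Fin r) (Fin r) ℝ)) hB1 (fun _ => (1:ℝ))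
      simp [dotProduct, Matrix.zero_mulVec, Finset.sum_const, Finset.card_univ] at h2
      nlinarith [h2, hrpos, hγmin]
    · exact hm
  have hn : 0 < n := by
    rcases Nat.eq_zero_or_pos n with hn0 | hn
    · exfalso
      subst hn0
      have hz : A * Aᵀ = 0 := by
        ext i j
        simp [Matrix.mul_apply]
      rw [hz] at hA1
      have h2 := psd_lower (Q := (0 : Matrix (Fin r) (Fin r) ℝ)) hA1 (fun _ => (1:ℝ))
      simp [dotProduct, Matrix.zero_mulVec, Finset.sum_const, Finset.card_univ] at h2
      nlinarith [h2, hrpos, hγmin]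
    · exact hn
  have hM : 0 ≤ M := by
    have h := hlip 0 (Matrix.of fun _ _ => (1:ℝ))
    have hWnorm : frobNorm ((0:Matrix (Fin m) (Fin n) ℝ) - Matrix.of (fun _ _ => (1:ℝ)))
        = Real.sqrt ((m:ℝ)*(n:ℝ)) := by
      unfold frobNorm
      congr 1
      simp [Matrix.sub_apply, Finset.sum_const, Finset.card_univ]
    rw [hWnorm] at h
    have hmn : (0:ℝ) < (m:ℝ)*(n:ℝ) := by
      have : (0:ℝ) < (m:ℝ) := by exact_mod_cast hm
      have : (0:ℝ) < (n:ℝ) := by exact_mod_cast hn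
      positivity
    have hpos : 0 < Real.sqrt ((m:ℝ)*(n:ℝ)) := Real.sqrt_pos.mpr hmn
    nlinarith [h, hpos, frobNorm_nonneg (gradL 0 - gradL (Matrix.of fun _ _ => (1:ℝ)))]
  -- transposed PSD inputs
  have hB2' : (γmax • (1 : Matrix (Fin r) (Fin r) ℝ) - Bᵀ * Bᵀᵀ).PosSemidef := by
    rw [Matrix.transpose_transpose]; exact hB2
  have hB2t' : (γmax • (1 : Matrix (Fin r) (Fin r) ℝ) - Btᵀ * Btᵀᵀ).PosSemidef := by
    rw [Matrix.transpose_transpose]; exact hB2t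
  -- product norm helpers
  have nAL : ∀ {k : ℕ} (Y : Matrix (Fin n) (Fin k) ℝ),
      frobNorm (A * Y) ≤ (Real.sqrt γmax) * frobNorm Y := fun Y => normL hγmax.le hA2 Y
  have nART : ∀ {k : ℕ} (Y : Matrix (Fin k) (Fin n) ℝ),
      frobNorm (Y * Aᵀ) ≤ (Real.sqrt γmax) * frobNorm Y := fun Y => normRT hγmax.le hA2 Y
  have nAtRT : ∀ {k : ℕ} (Y : Matrix (Fin k) (Fin n) ℝ),
      frobNorm (Y * Atᵀ) ≤ (Real.sqrt γmax) * frobNorm Y := fun Y => normRT hγmax.le hA2t Y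
  have nAtR : ∀ {k : ℕ} (Y : Matrix (Fin k) (Fin r) ℝ),
      frobNorm (Y * At) ≤ (Real.sqrt γmax) * frobNorm Y := fun Y => normR hγmax.le hA2t Y
  have nBL : ∀ {k : ℕ} (Y : Matrix (Fin r) (Fin k) ℝ),
      frobNorm (B * Y) ≤ (Real.sqrt γmax) * frobNorm Y := fun Y => by
    have h := normLT hγmax.le hB2' Y
    rwa [Matrix.transpose_transpose] at h
  have nBTL : ∀ {k : ℕ} (Y : Matrix (Fin m) (Fin k) ℝ),
      frobNorm (Bᵀ * Y) ≤ (Real.sqrt γmax) * frobNorm Y := fun Y => normL hγmax.le hB2' Y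
  have nBtTL : ∀ {k : ℕ} (Y : Matrix (Fin m) (Fin k) ℝ),
      frobNorm (Btᵀ * Y) ≤ (Real.sqrt γmax) * frobNorm Y := fun Y => normL hγmax.le hB2t' Y
  have pBt : ∀ {k : ℕ} (Y : Matrix (Fin m) (Fin k) ℝ),
      frobNorm (((Btᵀ * Bt)⁻¹) * Btᵀ * Y) ≤ (Real.sqrt γmin)⁻¹ * frobNorm Y := fun Y => pinvL hγmin hB1t Y
  have iBL : ∀ {k : ℕ} (Y : Matrix (Fin r) (Fin k) ℝ),
      frobNorm (((Bᵀ * B)⁻¹) * Y) ≤ γmin⁻¹ * frobNorm Y := fun Y => invL hγmin hB1 Y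
  have iBtL : ∀ {k : ℕ} (Y : Matrix (Fin r) (Fin k) ℝ),
      frobNorm (((Btᵀ * Bt)⁻¹) * Y) ≤ γmin⁻¹ * frobNorm Y := fun Y => invL hγmin hB1t Y
  have iBR : ∀ {k : ℕ} (Y : Matrix (Fin k) (Fin r) ℝ),
      frobNorm (Y * ((Bᵀ * B)⁻¹)) ≤ γmin⁻¹ * frobNorm Y := fun Y => invR hγmin hB1 Y
  have iBtR : ∀ {k : ℕ} (Y : Matrix (Fin k) (Fin r) ℝ),
      frobNorm (Y * ((Btᵀ * Bt)⁻¹)) ≤ γmin⁻¹ * frobNorm Y := fun Y => invR hγmin hB1t Y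
  -- gradient bounds
  have hGn : frobNorm (gradL (Wpt + B * A)) ≤ L₀ := hbound _
  have hGtn : frobNorm (gradL (Wpt + Bt * At)) ≤ L₀ := hbound _
  have hGd : frobNorm ((gradL (Wpt + B * A)) - (gradL (Wpt + Bt * At))) ≤ M * ((Real.sqrt γmax) * ((frobNorm (A - At)) + (frobNorm (B - Bt)))) := by
    have h1 := hlip (Wpt + B * A) (Wpt + Bt * At)
    have e : (Wpt + B * A) - (Wpt + Bt * At) = B * (A - At) + (B - Bt) * At := by
      rw [Matrix.mul_sub, Matrix.sub_mul]; abel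
    rw [e] at h1
    have h2 : frobNorm (B * (A - At) + (B - Bt) * At) ≤ (Real.sqrt γmax) * ((frobNorm (A - At)) + (frobNorm (B - Bt))) := by
      calc frobNorm (B * (A - At) + (B - Bt) * At)
          ≤ frobNorm (B * (A - At)) + frobNorm ((B - Bt) * At) := frobNorm_add_le _ _
        _ ≤ (Real.sqrt γmax) * (frobNorm (A - At)) + (Real.sqrt γmax) * (frobNorm (B - Bt)) := add_le_add (nBL _) (nAtR _)
        _ = (Real.sqrt γmax) * ((frobNorm (A - At)) + (frobNorm (B - Bt))) := by ring
    calc frobNorm ((gradL (Wpt + B * A)) - (gradL (Wpt + Bt * At))) ≤ M * frobNorm (B * (A - At) + (B - Bt) * At) := h1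
      _ ≤ M * ((Real.sqrt γmax) * ((frobNorm (A - At)) + (frobNorm (B - Bt)))) := mul_le_mul_of_nonneg_left h2 hM
  -- coercivity
  have hHpsd : ((A * Aᵀ + Bᵀ * B) - (2*γmin) • (1 : Matrix (Fin r) (Fin r) ℝ)).PosSemidef := by
    have h := hA1.add hB1
    have e : (A * Aᵀ - γmin • (1 : Matrix (Fin r) (Fin r) ℝ))
        + (Bᵀ * B - γmin • (1 : Matrix (Fin r) (Fin r) ℝ))
        = (A * Aᵀ + Bᵀ * B) - (2*γmin) • (1 : Matrix (Fin r) (Fin r) ℝ) := by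
      rw [two_mul, add_smul]; abel
    rwa [e] at h
  have hHtpsd : ((At * Atᵀ + Btᵀ * Bt) - (2*γmin) • (1 : Matrix (Fin r) (Fin r) ℝ)).PosSemidef := by
    have h := hA1t.add hB1t
    have e : (At * Atᵀ - γmin • (1 : Matrix (Fin r) (Fin r) ℝ))
        + (Btᵀ * Bt - γmin • (1 : Matrix (Fin r) (Fin r) ℝ))
        = (At * Atᵀ + Btᵀ * Bt) - (2*γmin) • (1 : Matrix (Fin r) (Fin r) ℝ) := by
      rw [two_mul, add_smul]; abel
    rwa [e] at h
  -- symmetry of the right-hand sides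
  have hSTx : (((Bᵀ * B)⁻¹) * Bᵀ * (gradL (Wpt + B * A)) * Aᵀ)ᵀ = A * (gradL (Wpt + B * A))ᵀ * B * ((Bᵀ * B)⁻¹) := by
    simp only [Matrix.transpose_mul, Matrix.transpose_transpose, gram_inv_symm,
      Matrix.mul_assoc]
  have hSTt : (((Btᵀ * Bt)⁻¹) * Btᵀ * (gradL (Wpt + Bt * At)) * Atᵀ)ᵀ = At * (gradL (Wpt + Bt * At))ᵀ * Bt * ((Btᵀ * Bt)⁻¹) := by
    simp only [Matrix.transpose_mul, Matrix.transpose_transpose, gram_inv_symm,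
      Matrix.mul_assoc]
  -- bound on ‖Xt‖
  have hStb : frobNorm (((Btᵀ * Bt)⁻¹) * Btᵀ * (gradL (Wpt + Bt * At)) * Atᵀ) ≤ (Real.sqrt γmax) * ((Real.sqrt γmin)⁻¹ * L₀) := by
    calc frobNorm (((Btᵀ * Bt)⁻¹) * Btᵀ * (gradL (Wpt + Bt * At)) * Atᵀ) ≤ (Real.sqrt γmax) * frobNorm (((Btᵀ * Bt)⁻¹) * Btᵀ * (gradL (Wpt + Bt * At))) := nAtRT _
      _ ≤ (Real.sqrt γmax) * ((Real.sqrt γmin)⁻¹ * L₀) := by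
          refine mul_le_mul_of_nonneg_left ?_ hs0.le
          calc frobNorm (((Btᵀ * Bt)⁻¹) * Btᵀ * (gradL (Wpt + Bt * At))) ≤ (Real.sqrt γmin)⁻¹ * frobNorm (gradL (Wpt + Bt * At)) := pBt _
            _ ≤ (Real.sqrt γmin)⁻¹ * L₀ := mul_le_mul_of_nonneg_left hGtn (by positivity)
  have hCtb : frobNorm (((Btᵀ * Bt)⁻¹ * Btᵀ * (gradL (Wpt + Bt * At)) * Atᵀ + At * (gradL (Wpt + Bt * At))ᵀ * Bt * (Btᵀ * Bt)⁻¹)) ≤ 2 * ((Real.sqrt γmax) * ((Real.sqrt γmin)⁻¹ * L₀)) := by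
    calc frobNorm (((Btᵀ * Bt)⁻¹ * Btᵀ * (gradL (Wpt + Bt * At)) * Atᵀ + At * (gradL (Wpt + Bt * At))ᵀ * Bt * (Btᵀ * Bt)⁻¹))
        ≤ frobNorm (((Btᵀ * Bt)⁻¹) * Btᵀ * (gradL (Wpt + Bt * At)) * Atᵀ) + frobNorm (At * (gradL (Wpt + Bt * At))ᵀ * Bt * ((Btᵀ * Bt)⁻¹)) :=
          frobNorm_add_le _ _
      _ = frobNorm (((Btᵀ * Bt)⁻¹) * Btᵀ * (gradL (Wpt + Bt * At)) * Atᵀ) + frobNorm ((((Btᵀ * Bt)⁻¹) * Btᵀ * (gradL (Wpt + Bt * At)) * Atᵀ)ᵀ) := by rw [hSTt]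
      _ = 2 * frobNorm (((Btᵀ * Bt)⁻¹) * Btᵀ * (gradL (Wpt + Bt * At)) * Atᵀ) := by rw [frobNorm_transpose]; ring
      _ ≤ 2 * ((Real.sqrt γmax) * ((Real.sqrt γmin)⁻¹ * L₀)) := by linarith [hStb]
  have hXtb : frobNorm Xt ≤ (2 * ((Real.sqrt γmax) * ((Real.sqrt γmin)⁻¹ * L₀))) / (2*(2*γmin)) := by
    have h := syl_bound (by positivity) hHtpsd hXt
    refine le_trans h ?_
    gcongr
    -- main perturbation identity
  have hmain : (A * Aᵀ + Bᵀ * B) * (X - Xt) + (X - Xt) * (A * Aᵀ + Bᵀ * B)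
      = (((Bᵀ * B)⁻¹ * Bᵀ * (gradL (Wpt + B * A)) * Aᵀ + A * (gradL (Wpt + B * A))ᵀ * B * (Bᵀ * B)⁻¹) - ((Btᵀ * Bt)⁻¹ * Btᵀ * (gradL (Wpt + Bt * At)) * Atᵀ + At * (gradL (Wpt + Bt * At))ᵀ * Bt * (Btᵀ * Bt)⁻¹)) - (((A * Aᵀ + Bᵀ * B) - (At * Atᵀ + Btᵀ * Bt)) * Xt + Xt * ((A * Aᵀ + Bᵀ * B) - (At * Atᵀ + Btᵀ * Bt))) := by
    rw [← hX, ← hXt]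
    simp only [Matrix.mul_sub, Matrix.sub_mul]
    abel
  have hDb : frobNorm (X - Xt)
      ≤ frobNorm ((((Bᵀ * B)⁻¹ * Bᵀ * (gradL (Wpt + B * A)) * Aᵀ + A * (gradL (Wpt + B * A))ᵀ * B * (Bᵀ * B)⁻¹) - ((Btᵀ * Bt)⁻¹ * Btᵀ * (gradL (Wpt + Bt * At)) * Atᵀ + At * (gradL (Wpt + Bt * At))ᵀ * Bt * (Btᵀ * Bt)⁻¹)) - (((A * Aᵀ + Bᵀ * B) - (At * Atᵀ + Btᵀ * Bt)) * Xt + Xt * ((A * Aᵀ + Bᵀ * B) - (At * Atᵀ + Btᵀ * Bt)))) / (2*(2*γmin)) :=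
    syl_bound (by positivity) hHpsd hmain
  -- bound on ‖H - Ht‖
  have hHd : frobNorm ((A * Aᵀ + Bᵀ * B) - (At * Atᵀ + Btᵀ * Bt)) ≤ (Real.sqrt γmax)*(frobNorm (A - At)) + (Real.sqrt γmax)*(frobNorm (A - At)) + ((Real.sqrt γmax)*(frobNorm (B - Bt)) + (Real.sqrt γmax)*(frobNorm (B - Bt))) := by
    have hid : (A * Aᵀ + Bᵀ * B) - (At * Atᵀ + Btᵀ * Bt) = A*(A-At)ᵀ + (A-At)*Atᵀ + (Bᵀ*(B-Bt) + (B-Bt)ᵀ*Bt) := by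
      simp only [Matrix.mul_sub, Matrix.sub_mul, Matrix.transpose_sub]; abel
    rw [hid]
    have h1 : frobNorm (A*(A-At)ᵀ) ≤ (Real.sqrt γmax)*(frobNorm (A - At)) := by
      have h := nAL (A-At)ᵀ
      rwa [frobNorm_transpose] at h
    have h2 : frobNorm ((A-At)*Atᵀ) ≤ (Real.sqrt γmax)*(frobNorm (A - At)) := nAtRT _
    have h3 : frobNorm (Bᵀ*(B-Bt)) ≤ (Real.sqrt γmax)*(frobNorm (B - Bt)) := nBTL _
    have h4 : frobNorm ((B-Bt)ᵀ*Bt) ≤ (Real.sqrt γmax)*(frobNorm (B - Bt)) := by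
      have e : ((B-Bt)ᵀ*Bt)ᵀ = Btᵀ*(B-Bt) := by
        rw [Matrix.transpose_mul, Matrix.transpose_transpose]
      have h := nBtTL (B-Bt)
      rw [← frobNorm_transpose ((B-Bt)ᵀ*Bt), e]
      exact h
    calc frobNorm (A*(A-At)ᵀ + (A-At)*Atᵀ + (Bᵀ*(B-Bt) + (B-Bt)ᵀ*Bt))
        ≤ frobNorm (A*(A-At)ᵀ + (A-At)*Atᵀ) + frobNorm (Bᵀ*(B-Bt) + (B-Bt)ᵀ*Bt) :=
          frobNorm_add_le _ _
      _ ≤ (frobNorm (A*(A-At)ᵀ) + frobNorm ((A-At)*Atᵀ))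
            + (frobNorm (Bᵀ*(B-Bt)) + frobNorm ((B-Bt)ᵀ*Bt)) :=
          add_le_add (frobNorm_add_le _ _) (frobNorm_add_le _ _)
      _ ≤ (Real.sqrt γmax)*(frobNorm (A - At)) + (Real.sqrt γmax)*(frobNorm (A - At)) + ((Real.sqrt γmax)*(frobNorm (B - Bt)) + (Real.sqrt γmax)*(frobNorm (B - Bt))) := by linarith [h1, h2, h3, h4]
  -- bound on ‖P - Pt‖
  have hPd : frobNorm (((Bᵀ * B)⁻¹) - ((Btᵀ * Bt)⁻¹))
      ≤ γmin⁻¹*(γmin⁻¹*((Real.sqrt γmax)*(frobNorm (B - Bt)))) + γmin⁻¹*(γmin⁻¹*((Real.sqrt γmax)*(frobNorm (B - Bt)))) := by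
    have hPid : ((Bᵀ * B)⁻¹) - ((Btᵀ * Bt)⁻¹) = (((Bᵀ * B)⁻¹) * ((Bt-B)ᵀ*Bt)) * ((Btᵀ * Bt)⁻¹) + (((Bᵀ * B)⁻¹) * (Bᵀ*(Bt-B))) * ((Btᵀ * Bt)⁻¹) := by
      have h1 : ((Bᵀ * B)⁻¹) * ((Btᵀ*Bt) * ((Btᵀ * Bt)⁻¹)) = ((Bᵀ * B)⁻¹) := by
        rw [gram_mul_inv hγmin hB1t, Matrix.mul_one]
      have h2 : (((Bᵀ * B)⁻¹) * (Bᵀ*B)) * ((Btᵀ * Bt)⁻¹) = ((Btᵀ * Bt)⁻¹) := by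
        rw [gram_inv_mul hγmin hB1, Matrix.one_mul]
      calc ((Bᵀ * B)⁻¹) - ((Btᵀ * Bt)⁻¹) = ((Bᵀ * B)⁻¹) * ((Btᵀ*Bt) * ((Btᵀ * Bt)⁻¹)) - (((Bᵀ * B)⁻¹) * (Bᵀ*B)) * ((Btᵀ * Bt)⁻¹) := by rw [h1, h2]
        _ = (((Bᵀ * B)⁻¹) * ((Bt-B)ᵀ*Bt)) * ((Btᵀ * Bt)⁻¹) + (((Bᵀ * B)⁻¹) * (Bᵀ*(Bt-B))) * ((Btᵀ * Bt)⁻¹) := by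
            simp only [Matrix.mul_sub, Matrix.sub_mul, Matrix.transpose_sub,
              Matrix.mul_assoc]
            abel
    rw [hPid]
    have hin1 : frobNorm (((Bᵀ * B)⁻¹) * ((Bt-B)ᵀ*Bt)) ≤ γmin⁻¹*((Real.sqrt γmax)*(frobNorm (B - Bt))) := by
      have e : (((Bᵀ * B)⁻¹) * ((Bt-B)ᵀ*Bt))ᵀ = (Btᵀ*(Bt-B)) * ((Bᵀ * B)⁻¹) := by
        rw [Matrix.transpose_mul, Matrix.transpose_mul, Matrix.transpose_transpose,
          gram_inv_symm]
      rw [← frobNorm_transpose (((Bᵀ * B)⁻¹) * ((Bt-B)ᵀ*Bt)), e]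
      calc frobNorm ((Btᵀ*(Bt-B))*((Bᵀ * B)⁻¹)) ≤ γmin⁻¹ * frobNorm (Btᵀ*(Bt-B)) := iBR _
        _ ≤ γmin⁻¹ * ((Real.sqrt γmax)*(frobNorm (B - Bt))) := by
            refine mul_le_mul_of_nonneg_left ?_ (by positivity)
            have h := nBtTL (Bt-B)
            rwa [frobNorm_sub_comm Bt B] at h
    have hin2 : frobNorm (((Bᵀ * B)⁻¹) * (Bᵀ*(Bt-B))) ≤ γmin⁻¹*((Real.sqrt γmax)*(frobNorm (B - Bt))) := by
      calc frobNorm (((Bᵀ * B)⁻¹) * (Bᵀ*(Bt-B))) ≤ γmin⁻¹ * frobNorm (Bᵀ*(Bt-B)) := iBL _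
        _ ≤ γmin⁻¹ * ((Real.sqrt γmax)*(frobNorm (B - Bt))) := by
            refine mul_le_mul_of_nonneg_left ?_ (by positivity)
            have h := nBTL (Bt-B)
            rwa [frobNorm_sub_comm Bt B] at h
    have hA' : frobNorm ((((Bᵀ * B)⁻¹) * ((Bt-B)ᵀ*Bt)) * ((Btᵀ * Bt)⁻¹)) ≤ γmin⁻¹*(γmin⁻¹*((Real.sqrt γmax)*(frobNorm (B - Bt)))) :=
      le_trans (iBtR _) (mul_le_mul_of_nonneg_left hin1 (by positivity))
    have hB' : frobNorm ((((Bᵀ * B)⁻¹) * (Bᵀ*(Bt-B))) * ((Btᵀ * Bt)⁻¹)) ≤ γmin⁻¹*(γmin⁻¹*((Real.sqrt γmax)*(frobNorm (B - Bt)))) :=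
      le_trans (iBtR _) (mul_le_mul_of_nonneg_left hin2 (by positivity))
    exact le_trans (frobNorm_add_le _ _) (add_le_add hA' hB')
  -- telescoping of S - St
  have hSd : ((Bᵀ * B)⁻¹)*Bᵀ*(gradL (Wpt + B * A))*Aᵀ - ((Btᵀ * Bt)⁻¹)*Btᵀ*(gradL (Wpt + Bt * At))*Atᵀ
      = (((Bᵀ * B)⁻¹)-((Btᵀ * Bt)⁻¹))*Bᵀ*(gradL (Wpt + B * A))*Aᵀ + ((Btᵀ * Bt)⁻¹)*(B-Bt)ᵀ*(gradL (Wpt + B * A))*Aᵀ + ((Btᵀ * Bt)⁻¹)*Btᵀ*((gradL (Wpt + B * A))-(gradL (Wpt + Bt * At)))*Aᵀ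
        + ((Btᵀ * Bt)⁻¹)*Btᵀ*(gradL (Wpt + Bt * At))*(A-At)ᵀ := by
    simp only [Matrix.mul_sub, Matrix.sub_mul, Matrix.transpose_sub, Matrix.mul_assoc]
    abel
  -- bounds for the four terms
  have hPdnn : 0 ≤ γmin⁻¹*(γmin⁻¹*((Real.sqrt γmax)*(frobNorm (B - Bt)))) + γmin⁻¹*(γmin⁻¹*((Real.sqrt γmax)*(frobNorm (B - Bt)))) := by
    have := hb0; positivity
  have hT1 : frobNorm ((((Bᵀ * B)⁻¹)-((Btᵀ * Bt)⁻¹))*Bᵀ*(gradL (Wpt + B * A))*Aᵀ)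
      ≤ (Real.sqrt γmax)*(((Real.sqrt γmax)*(γmin⁻¹*(γmin⁻¹*((Real.sqrt γmax)*(frobNorm (B - Bt)))) + γmin⁻¹*(γmin⁻¹*((Real.sqrt γmax)*(frobNorm (B - Bt))))))*L₀) := by
    calc frobNorm ((((Bᵀ * B)⁻¹)-((Btᵀ * Bt)⁻¹))*Bᵀ*(gradL (Wpt + B * A))*Aᵀ) ≤ (Real.sqrt γmax) * frobNorm ((((Bᵀ * B)⁻¹)-((Btᵀ * Bt)⁻¹))*Bᵀ*(gradL (Wpt + B * A))) := nART _
      _ ≤ (Real.sqrt γmax)*(((Real.sqrt γmax)*(γmin⁻¹*(γmin⁻¹*((Real.sqrt γmax)*(frobNorm (B - Bt)))) + γmin⁻¹*(γmin⁻¹*((Real.sqrt γmax)*(frobNorm (B - Bt))))))*L₀) := by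
          refine mul_le_mul_of_nonneg_left ?_ hs0.le
          have hPB : frobNorm ((((Bᵀ * B)⁻¹)-((Btᵀ * Bt)⁻¹))*Bᵀ) ≤ (Real.sqrt γmax)*(γmin⁻¹*(γmin⁻¹*((Real.sqrt γmax)*(frobNorm (B - Bt)))) + γmin⁻¹*(γmin⁻¹*((Real.sqrt γmax)*(frobNorm (B - Bt))))) := by
            have e : ((((Bᵀ * B)⁻¹)-((Btᵀ * Bt)⁻¹))*Bᵀ)ᵀ = B*(((Bᵀ * B)⁻¹)-((Btᵀ * Bt)⁻¹)) := by
              rw [Matrix.transpose_mul, Matrix.transpose_transpose, Matrix.transpose_sub,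
                gram_inv_symm, gram_inv_symm]
            rw [← frobNorm_transpose ((((Bᵀ * B)⁻¹)-((Btᵀ * Bt)⁻¹))*Bᵀ), e]
            exact le_trans (nBL _) (mul_le_mul_of_nonneg_left hPd hs0.le)
          calc frobNorm ((((Bᵀ * B)⁻¹)-((Btᵀ * Bt)⁻¹))*Bᵀ*(gradL (Wpt + B * A))) ≤ frobNorm ((((Bᵀ * B)⁻¹)-((Btᵀ * Bt)⁻¹))*Bᵀ) * frobNorm (gradL (Wpt + B * A)) :=
                frobNorm_mul_le _ _
            _ ≤ ((Real.sqrt γmax)*(γmin⁻¹*(γmin⁻¹*((Real.sqrt γmax)*(frobNorm (B - Bt)))) + γmin⁻¹*(γmin⁻¹*((Real.sqrt γmax)*(frobNorm (B - Bt))))))*L₀ :=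
                mul_le_mul hPB hGn (frobNorm_nonneg _) (by positivity)
  have hT2 : frobNorm (((Btᵀ * Bt)⁻¹)*(B-Bt)ᵀ*(gradL (Wpt + B * A))*Aᵀ) ≤ (Real.sqrt γmax)*((γmin⁻¹*(frobNorm (B - Bt)))*L₀) := by
    calc frobNorm (((Btᵀ * Bt)⁻¹)*(B-Bt)ᵀ*(gradL (Wpt + B * A))*Aᵀ) ≤ (Real.sqrt γmax) * frobNorm (((Btᵀ * Bt)⁻¹)*(B-Bt)ᵀ*(gradL (Wpt + B * A))) := nART _
      _ ≤ (Real.sqrt γmax)*((γmin⁻¹*(frobNorm (B - Bt)))*L₀) := by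
          refine mul_le_mul_of_nonneg_left ?_ hs0.le
          have hPB : frobNorm (((Btᵀ * Bt)⁻¹)*(B-Bt)ᵀ) ≤ γmin⁻¹*(frobNorm (B - Bt)) := by
            have h := iBtL (B-Bt)ᵀ
            rwa [frobNorm_transpose] at h
          calc frobNorm (((Btᵀ * Bt)⁻¹)*(B-Bt)ᵀ*(gradL (Wpt + B * A))) ≤ frobNorm (((Btᵀ * Bt)⁻¹)*(B-Bt)ᵀ) * frobNorm (gradL (Wpt + B * A)) :=
                frobNorm_mul_le _ _
            _ ≤ (γmin⁻¹*(frobNorm (B - Bt)))*L₀ := mul_le_mul hPB hGn (frobNorm_nonneg _) (by positivity)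
  have hT3 : frobNorm (((Btᵀ * Bt)⁻¹)*Btᵀ*((gradL (Wpt + B * A))-(gradL (Wpt + Bt * At)))*Aᵀ) ≤ (Real.sqrt γmax)*((Real.sqrt γmin)⁻¹*(M*((Real.sqrt γmax)*((frobNorm (A - At))+(frobNorm (B - Bt)))))) := by
    calc frobNorm (((Btᵀ * Bt)⁻¹)*Btᵀ*((gradL (Wpt + B * A))-(gradL (Wpt + Bt * At)))*Aᵀ) ≤ (Real.sqrt γmax) * frobNorm (((Btᵀ * Bt)⁻¹)*Btᵀ*((gradL (Wpt + B * A))-(gradL (Wpt + Bt * At)))) := nART _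
      _ ≤ (Real.sqrt γmax)*((Real.sqrt γmin)⁻¹*(M*((Real.sqrt γmax)*((frobNorm (A - At))+(frobNorm (B - Bt)))))) := by
          refine mul_le_mul_of_nonneg_left ?_ hs0.le
          calc frobNorm (((Btᵀ * Bt)⁻¹)*Btᵀ*((gradL (Wpt + B * A))-(gradL (Wpt + Bt * At)))) ≤ (Real.sqrt γmin)⁻¹ * frobNorm ((gradL (Wpt + B * A))-(gradL (Wpt + Bt * At))) := pBt _
            _ ≤ (Real.sqrt γmin)⁻¹*(M*((Real.sqrt γmax)*((frobNorm (A - At))+(frobNorm (B - Bt))))) := mul_le_mul_of_nonneg_left hGd (by positivity)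
  have hT4 : frobNorm (((Btᵀ * Bt)⁻¹)*Btᵀ*(gradL (Wpt + Bt * At))*(A-At)ᵀ) ≤ (Real.sqrt γmin)⁻¹*(L₀*(frobNorm (A - At))) := by
    have e : ((Btᵀ * Bt)⁻¹)*Btᵀ*(gradL (Wpt + Bt * At))*(A-At)ᵀ = ((Btᵀ * Bt)⁻¹)*Btᵀ*((gradL (Wpt + Bt * At))*(A-At)ᵀ) := by
      rw [Matrix.mul_assoc]
    rw [e]
    calc frobNorm (((Btᵀ * Bt)⁻¹)*Btᵀ*((gradL (Wpt + Bt * At))*(A-At)ᵀ)) ≤ (Real.sqrt γmin)⁻¹ * frobNorm ((gradL (Wpt + Bt * At))*(A-At)ᵀ) := pBt _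
      _ ≤ (Real.sqrt γmin)⁻¹*(L₀*(frobNorm (A - At))) := by
          refine mul_le_mul_of_nonneg_left ?_ (by positivity)
          calc frobNorm ((gradL (Wpt + Bt * At))*(A-At)ᵀ) ≤ frobNorm (gradL (Wpt + Bt * At)) * frobNorm (A-At)ᵀ :=
                frobNorm_mul_le _ _
            _ ≤ L₀*(frobNorm (A - At)) := by
                rw [frobNorm_transpose]
                exact mul_le_mul_of_nonneg_right hGtn ha0
    -- assemble the bound on the C-difference
  have hCd : frobNorm (((Bᵀ * B)⁻¹ * Bᵀ * (gradL (Wpt + B * A)) * Aᵀ + A * (gradL (Wpt + B * A))ᵀ * B * (Bᵀ * B)⁻¹) - ((Btᵀ * Bt)⁻¹ * Btᵀ * (gradL (Wpt + Bt * At)) * Atᵀ + At * (gradL (Wpt + Bt * At))ᵀ * Bt * (Btᵀ * Bt)⁻¹))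
      ≤ 2*(((Real.sqrt γmax)*(((Real.sqrt γmax)*(γmin⁻¹*(γmin⁻¹*((Real.sqrt γmax)*(frobNorm (B - Bt)))) + γmin⁻¹*(γmin⁻¹*((Real.sqrt γmax)*(frobNorm (B - Bt))))))*L₀)) + ((Real.sqrt γmax)*((γmin⁻¹*(frobNorm (B - Bt)))*L₀)) + ((Real.sqrt γmax)*((Real.sqrt γmin)⁻¹*(M*((Real.sqrt γmax)*((frobNorm (A - At))+(frobNorm (B - Bt))))))) + ((Real.sqrt γmin)⁻¹*(L₀*(frobNorm (A - At))))) := by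
    have e : ((Bᵀ * B)⁻¹ * Bᵀ * (gradL (Wpt + B * A)) * Aᵀ + A * (gradL (Wpt + B * A))ᵀ * B * (Bᵀ * B)⁻¹) - ((Btᵀ * Bt)⁻¹ * Btᵀ * (gradL (Wpt + Bt * At)) * Atᵀ + At * (gradL (Wpt + Bt * At))ᵀ * Bt * (Btᵀ * Bt)⁻¹)
        = (((Bᵀ * B)⁻¹)*Bᵀ*(gradL (Wpt + B * A))*Aᵀ - ((Btᵀ * Bt)⁻¹)*Btᵀ*(gradL (Wpt + Bt * At))*Atᵀ) + (((Bᵀ * B)⁻¹)*Bᵀ*(gradL (Wpt + B * A))*Aᵀ - ((Btᵀ * Bt)⁻¹)*Btᵀ*(gradL (Wpt + Bt * At))*Atᵀ)ᵀ := by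
      rw [Matrix.transpose_sub, hSTx, hSTt]
      abel
    rw [e]
    have hS : frobNorm (((Bᵀ * B)⁻¹)*Bᵀ*(gradL (Wpt + B * A))*Aᵀ - ((Btᵀ * Bt)⁻¹)*Btᵀ*(gradL (Wpt + Bt * At))*Atᵀ) ≤ ((Real.sqrt γmax)*(((Real.sqrt γmax)*(γmin⁻¹*(γmin⁻¹*((Real.sqrt γmax)*(frobNorm (B - Bt)))) + γmin⁻¹*(γmin⁻¹*((Real.sqrt γmax)*(frobNorm (B - Bt))))))*L₀)) + ((Real.sqrt γmax)*((γmin⁻¹*(frobNorm (B - Bt)))*L₀)) + ((Real.sqrt γmax)*((Real.sqrt γmin)⁻¹*(M*((Real.sqrt γmax)*((frobNorm (A - At))+(frobNorm (B - Bt))))))) + ((Real.sqrt γmin)⁻¹*(L₀*(frobNorm (A - At)))) := by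
      rw [hSd]
      calc frobNorm ((((Bᵀ * B)⁻¹)-((Btᵀ * Bt)⁻¹))*Bᵀ*(gradL (Wpt + B * A))*Aᵀ + ((Btᵀ * Bt)⁻¹)*(B-Bt)ᵀ*(gradL (Wpt + B * A))*Aᵀ + ((Btᵀ * Bt)⁻¹)*Btᵀ*((gradL (Wpt + B * A))-(gradL (Wpt + Bt * At)))*Aᵀ
              + ((Btᵀ * Bt)⁻¹)*Btᵀ*(gradL (Wpt + Bt * At))*(A-At)ᵀ)
          ≤ frobNorm ((((Bᵀ * B)⁻¹)-((Btᵀ * Bt)⁻¹))*Bᵀ*(gradL (Wpt + B * A))*Aᵀ + ((Btᵀ * Bt)⁻¹)*(B-Bt)ᵀ*(gradL (Wpt + B * A))*Aᵀ + ((Btᵀ * Bt)⁻¹)*Btᵀ*((gradL (Wpt + B * A))-(gradL (Wpt + Bt * At)))*Aᵀ)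
            + frobNorm (((Btᵀ * Bt)⁻¹)*Btᵀ*(gradL (Wpt + Bt * At))*(A-At)ᵀ) := frobNorm_add_le _ _
        _ ≤ (frobNorm ((((Bᵀ * B)⁻¹)-((Btᵀ * Bt)⁻¹))*Bᵀ*(gradL (Wpt + B * A))*Aᵀ + ((Btᵀ * Bt)⁻¹)*(B-Bt)ᵀ*(gradL (Wpt + B * A))*Aᵀ)
              + frobNorm (((Btᵀ * Bt)⁻¹)*Btᵀ*((gradL (Wpt + B * A))-(gradL (Wpt + Bt * At)))*Aᵀ)) + frobNorm (((Btᵀ * Bt)⁻¹)*Btᵀ*(gradL (Wpt + Bt * At))*(A-At)ᵀ) := by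
            linarith [frobNorm_add_le ((((Bᵀ * B)⁻¹)-((Btᵀ * Bt)⁻¹))*Bᵀ*(gradL (Wpt + B * A))*Aᵀ + ((Btᵀ * Bt)⁻¹)*(B-Bt)ᵀ*(gradL (Wpt + B * A))*Aᵀ)
              (((Btᵀ * Bt)⁻¹)*Btᵀ*((gradL (Wpt + B * A))-(gradL (Wpt + Bt * At)))*Aᵀ)]
        _ ≤ ((frobNorm ((((Bᵀ * B)⁻¹)-((Btᵀ * Bt)⁻¹))*Bᵀ*(gradL (Wpt + B * A))*Aᵀ) + frobNorm (((Btᵀ * Bt)⁻¹)*(B-Bt)ᵀ*(gradL (Wpt + B * A))*Aᵀ))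
              + frobNorm (((Btᵀ * Bt)⁻¹)*Btᵀ*((gradL (Wpt + B * A))-(gradL (Wpt + Bt * At)))*Aᵀ)) + frobNorm (((Btᵀ * Bt)⁻¹)*Btᵀ*(gradL (Wpt + Bt * At))*(A-At)ᵀ) := by
            linarith [frobNorm_add_le ((((Bᵀ * B)⁻¹)-((Btᵀ * Bt)⁻¹))*Bᵀ*(gradL (Wpt + B * A))*Aᵀ) (((Btᵀ * Bt)⁻¹)*(B-Bt)ᵀ*(gradL (Wpt + B * A))*Aᵀ)]
        _ ≤ ((Real.sqrt γmax)*(((Real.sqrt γmax)*(γmin⁻¹*(γmin⁻¹*((Real.sqrt γmax)*(frobNorm (B - Bt)))) + γmin⁻¹*(γmin⁻¹*((Real.sqrt γmax)*(frobNorm (B - Bt))))))*L₀)) + ((Real.sqrt γmax)*((γmin⁻¹*(frobNorm (B - Bt)))*L₀)) + ((Real.sqrt γmax)*((Real.sqrt γmin)⁻¹*(M*((Real.sqrt γmax)*((frobNorm (A - At))+(frobNorm (B - Bt))))))) + ((Real.sqrt γmin)⁻¹*(L₀*(frobNorm (A - At)))) := by linarith [hT1, hT2, hT3, hT4]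
    calc frobNorm ((((Bᵀ * B)⁻¹)*Bᵀ*(gradL (Wpt + B * A))*Aᵀ - ((Btᵀ * Bt)⁻¹)*Btᵀ*(gradL (Wpt + Bt * At))*Atᵀ) + (((Bᵀ * B)⁻¹)*Bᵀ*(gradL (Wpt + B * A))*Aᵀ - ((Btᵀ * Bt)⁻¹)*Btᵀ*(gradL (Wpt + Bt * At))*Atᵀ)ᵀ)
        ≤ frobNorm (((Bᵀ * B)⁻¹)*Bᵀ*(gradL (Wpt + B * A))*Aᵀ - ((Btᵀ * Bt)⁻¹)*Btᵀ*(gradL (Wpt + Bt * At))*Atᵀ)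
          + frobNorm ((((Bᵀ * B)⁻¹)*Bᵀ*(gradL (Wpt + B * A))*Aᵀ - ((Btᵀ * Bt)⁻¹)*Btᵀ*(gradL (Wpt + Bt * At))*Atᵀ)ᵀ) := frobNorm_add_le _ _
      _ = 2 * frobNorm (((Bᵀ * B)⁻¹)*Bᵀ*(gradL (Wpt + B * A))*Aᵀ - ((Btᵀ * Bt)⁻¹)*Btᵀ*(gradL (Wpt + Bt * At))*Atᵀ) := by rw [frobNorm_transpose]; ring
      _ ≤ 2*(((Real.sqrt γmax)*(((Real.sqrt γmax)*(γmin⁻¹*(γmin⁻¹*((Real.sqrt γmax)*(frobNorm (B - Bt)))) + γmin⁻¹*(γmin⁻¹*((Real.sqrt γmax)*(frobNorm (B - Bt))))))*L₀)) + ((Real.sqrt γmax)*((γmin⁻¹*(frobNorm (B - Bt)))*L₀)) + ((Real.sqrt γmax)*((Real.sqrt γmin)⁻¹*(M*((Real.sqrt γmax)*((frobNorm (A - At))+(frobNorm (B - Bt))))))) + ((Real.sqrt γmin)⁻¹*(L₀*(frobNorm (A - At))))) := by linarith [hS]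
  have hWd0 : 0 ≤ ((Real.sqrt γmax)*(frobNorm (A - At)) + (Real.sqrt γmax)*(frobNorm (A - At)) + ((Real.sqrt γmax)*(frobNorm (B - Bt)) + (Real.sqrt γmax)*(frobNorm (B - Bt)))) :=
    add_nonneg (add_nonneg (mul_nonneg hs0.le ha0) (mul_nonneg hs0.le ha0))
      (add_nonneg (mul_nonneg hs0.le hb0) (mul_nonneg hs0.le hb0))
  have hZt0 : 0 ≤ ((2 * ((Real.sqrt γmax) * ((Real.sqrt γmin)⁻¹ * L₀))) / (2*(2*γmin))) :=
    div_nonneg (mul_nonneg (by norm_num)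
      (mul_nonneg hs0.le (mul_nonneg (by positivity) hL0))) (by positivity)
  have hU : frobNorm (((A * Aᵀ + Bᵀ * B)-(At * Atᵀ + Btᵀ * Bt))*Xt) ≤ ((Real.sqrt γmax)*(frobNorm (A - At)) + (Real.sqrt γmax)*(frobNorm (A - At)) + ((Real.sqrt γmax)*(frobNorm (B - Bt)) + (Real.sqrt γmax)*(frobNorm (B - Bt))))*((2 * ((Real.sqrt γmax) * ((Real.sqrt γmin)⁻¹ * L₀))) / (2*(2*γmin))) :=
    le_trans (frobNorm_mul_le _ _) (mul_le_mul hHd hXtb (frobNorm_nonneg _) hWd0)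
  have hV : frobNorm (Xt*((A * Aᵀ + Bᵀ * B)-(At * Atᵀ + Btᵀ * Bt))) ≤ ((2 * ((Real.sqrt γmax) * ((Real.sqrt γmin)⁻¹ * L₀))) / (2*(2*γmin)))*((Real.sqrt γmax)*(frobNorm (A - At)) + (Real.sqrt γmax)*(frobNorm (A - At)) + ((Real.sqrt γmax)*(frobNorm (B - Bt)) + (Real.sqrt γmax)*(frobNorm (B - Bt)))) :=
    le_trans (frobNorm_mul_le _ _) (mul_le_mul hXtb hHd (frobNorm_nonneg _) hZt0)
  have hDb2 : frobNorm (X - Xt)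
      ≤ (2*(((Real.sqrt γmax)*(((Real.sqrt γmax)*(γmin⁻¹*(γmin⁻¹*((Real.sqrt γmax)*(frobNorm (B - Bt)))) + γmin⁻¹*(γmin⁻¹*((Real.sqrt γmax)*(frobNorm (B - Bt))))))*L₀))+((Real.sqrt γmax)*((γmin⁻¹*(frobNorm (B - Bt)))*L₀))+((Real.sqrt γmax)*((Real.sqrt γmin)⁻¹*(M*((Real.sqrt γmax)*((frobNorm (A - At))+(frobNorm (B - Bt)))))))+((Real.sqrt γmin)⁻¹*(L₀*(frobNorm (A - At))))) + (((Real.sqrt γmax)*(frobNorm (A - At)) + (Real.sqrt γmax)*(frobNorm (A - At)) + ((Real.sqrt γmax)*(frobNorm (B - Bt)) + (Real.sqrt γmax)*(frobNorm (B - Bt))))*((2 * ((Real.sqrt γmax) * ((Real.sqrt γmin)⁻¹ * L₀))) / (2*(2*γmin))) + ((2 * ((Real.sqrt γmax) * ((Real.sqrt γmin)⁻¹ * L₀))) / (2*(2*γmin)))*((Real.sqrt γmax)*(frobNorm (A - At)) + (Real.sqrt γmax)*(frobNorm (A - At)) + ((Real.sqrt γmax)*(frobNorm (B - Bt)) + (Real.sqrt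 γmax)*(frobNorm (B - Bt))))))/(2*(2*γmin)) := by
    refine le_trans hDb ?_
    have hRb : frobNorm ((((Bᵀ * B)⁻¹ * Bᵀ * (gradL (Wpt + B * A)) * Aᵀ + A * (gradL (Wpt + B * A))ᵀ * B * (Bᵀ * B)⁻¹) - ((Btᵀ * Bt)⁻¹ * Btᵀ * (gradL (Wpt + Bt * At)) * Atᵀ + At * (gradL (Wpt + Bt * At))ᵀ * Bt * (Btᵀ * Bt)⁻¹)) - (((A * Aᵀ + Bᵀ * B)-(At * Atᵀ + Btᵀ * Bt))*Xt + Xt*((A * Aᵀ + Bᵀ * B)-(At * Atᵀ + Btᵀ * Bt))))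
        ≤ 2*(((Real.sqrt γmax)*(((Real.sqrt γmax)*(γmin⁻¹*(γmin⁻¹*((Real.sqrt γmax)*(frobNorm (B - Bt)))) + γmin⁻¹*(γmin⁻¹*((Real.sqrt γmax)*(frobNorm (B - Bt))))))*L₀))+((Real.sqrt γmax)*((γmin⁻¹*(frobNorm (B - Bt)))*L₀))+((Real.sqrt γmax)*((Real.sqrt γmin)⁻¹*(M*((Real.sqrt γmax)*((frobNorm (A - At))+(frobNorm (B - Bt)))))))+((Real.sqrt γmin)⁻¹*(L₀*(frobNorm (A - At))))) + (((Real.sqrt γmax)*(frobNorm (A - At)) + (Real.sqrt γmax)*(frobNorm (A - At)) + ((Real.sqrt γmax)*(frobNorm (B - Bt)) + (Real.sqrt γmax)*(frobNorm (B - Bt))))*((2 * ((Real.sqrt γmax) * ((Real.sqrt γmin)⁻¹ * L₀))) / (2*(2*γmin))) + ((2 * ((Real.sqrt γmax) * ((Real.sqrt γmin)⁻¹ * L₀))) / (2*(2*γmin)))*((Real.sqrt γmax)*(frobNorm (A - At)) + (Real.sqrt γmax)*(frobNorm (A - At)) + ((Real.sqrt γmax)*(frobNorm (B - Bt)) + (Real.sqrt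 γmax)*(frobNorm (B - Bt))))) := by
      calc frobNorm ((((Bᵀ * B)⁻¹ * Bᵀ * (gradL (Wpt + B * A)) * Aᵀ + A * (gradL (Wpt + B * A))ᵀ * B * (Bᵀ * B)⁻¹) - ((Btᵀ * Bt)⁻¹ * Btᵀ * (gradL (Wpt + Bt * At)) * Atᵀ + At * (gradL (Wpt + Bt * At))ᵀ * Bt * (Btᵀ * Bt)⁻¹)) - (((A * Aᵀ + Bᵀ * B)-(At * Atᵀ + Btᵀ * Bt))*Xt + Xt*((A * Aᵀ + Bᵀ * B)-(At * Atᵀ + Btᵀ * Bt))))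
          ≤ frobNorm (((Bᵀ * B)⁻¹ * Bᵀ * (gradL (Wpt + B * A)) * Aᵀ + A * (gradL (Wpt + B * A))ᵀ * B * (Bᵀ * B)⁻¹) - ((Btᵀ * Bt)⁻¹ * Btᵀ * (gradL (Wpt + Bt * At)) * Atᵀ + At * (gradL (Wpt + Bt * At))ᵀ * Bt * (Btᵀ * Bt)⁻¹)) + frobNorm (((A * Aᵀ + Bᵀ * B)-(At * Atᵀ + Btᵀ * Bt))*Xt + Xt*((A * Aᵀ + Bᵀ * B)-(At * Atᵀ + Btᵀ * Bt))) :=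
            frobNorm_sub_le _ _
        _ ≤ frobNorm (((Bᵀ * B)⁻¹ * Bᵀ * (gradL (Wpt + B * A)) * Aᵀ + A * (gradL (Wpt + B * A))ᵀ * B * (Bᵀ * B)⁻¹) - ((Btᵀ * Bt)⁻¹ * Btᵀ * (gradL (Wpt + Bt * At)) * Atᵀ + At * (gradL (Wpt + Bt * At))ᵀ * Bt * (Btᵀ * Bt)⁻¹)) + (frobNorm (((A * Aᵀ + Bᵀ * B)-(At * Atᵀ + Btᵀ * Bt))*Xt) + frobNorm (Xt*((A * Aᵀ + Bᵀ * B)-(At * Atᵀ + Btᵀ * Bt)))) := by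
            linarith [frobNorm_add_le (((A * Aᵀ + Bᵀ * B)-(At * Atᵀ + Btᵀ * Bt))*Xt) (Xt*((A * Aᵀ + Bᵀ * B)-(At * Atᵀ + Btᵀ * Bt)))]
        _ ≤ 2*(((Real.sqrt γmax)*(((Real.sqrt γmax)*(γmin⁻¹*(γmin⁻¹*((Real.sqrt γmax)*(frobNorm (B - Bt)))) + γmin⁻¹*(γmin⁻¹*((Real.sqrt γmax)*(frobNorm (B - Bt))))))*L₀))+((Real.sqrt γmax)*((γmin⁻¹*(frobNorm (B - Bt)))*L₀))+((Real.sqrt γmax)*((Real.sqrt γmin)⁻¹*(M*((Real.sqrt γmax)*((frobNorm (A - At))+(frobNorm (B - Bt)))))))+((Real.sqrt γmin)⁻¹*(L₀*(frobNorm (A - At))))) + (((Real.sqrt γmax)*(frobNorm (A - At)) + (Real.sqrt γmax)*(frobNorm (A - At)) + ((Real.sqrt γmax)*(frobNorm (B - Bt)) + (Real.sqrt γmax)*(frobNorm (B - Bt))))*((2 * ((Real.sqrt γmax) * ((Real.sqrt γmin)⁻¹ * L₀))) / (2*(2*γmin))) + ((2 * ((Real.sqrt γmax) * ((Real.sqrt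 γmin)⁻¹ * L₀))) / (2*(2*γmin)))*((Real.sqrt γmax)*(frobNorm (A - At)) + (Real.sqrt γmax)*(frobNorm (A - At)) + ((Real.sqrt γmax)*(frobNorm (B - Bt)) + (Real.sqrt γmax)*(frobNorm (B - Bt))))) := by linarith [hCd, hU, hV]
    gcongr
  have hr1 : γmin ^ ((3:ℝ)/2) = (Real.sqrt γmin)^3 := by
    conv_lhs => rw [hγq]
    rw [← Real.rpow_natCast (Real.sqrt γmin) 2, ← Real.rpow_mul (Real.sqrt_nonneg _),
      show ((2:ℕ):ℝ) * ((3:ℝ)/2) = ((3:ℕ):ℝ) by norm_num, Real.rpow_natCast]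
  have hr2 : γmax ^ ((3:ℝ)/2) = (Real.sqrt γmax)^3 := by
    conv_lhs => rw [hγs]
    rw [← Real.rpow_natCast (Real.sqrt γmax) 2, ← Real.rpow_mul (Real.sqrt_nonneg _),
      show ((2:ℕ):ℝ) * ((3:ℝ)/2) = ((3:ℕ):ℝ) by norm_num, Real.rpow_natCast]
  refine le_trans hDb2 ?_
  rw [hr1, hr2]
  exact sylKey γmin γmax (Real.sqrt γmin) (Real.sqrt γmax) (frobNorm (A - At)) (frobNorm (B - Bt)) M L₀ hq0 hs0 hqs hγq hγs hL0 hM ha0 hb0
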